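/- Let G = (V,E) be a directed mixed graph. If the directed edge α→β is in G, then α is a potential parent of β in the independence model I(G). -/

import Mathlib

/-!
Directed mixed graphs (DMGs) with μ-separation, following
Mogensen & Hansen, "Markov equivalence of marginalized local independence graphs".
-/

universe u

/-- A directed mixed graph on node set `V`: a set of directed edges (`dir a b`
meaning `a → b`) and a set of bidirected edges (`bi`, a symmetric relation since
bidirected edges are unordered pairs).  Loops are allowed. -/
structure DMG (V : Type u) where
  dir : V → V → Prop
  bi : V → V → Prop
  bi_symm : ∀ a b, bi a b → bi b a

namespace DMG

variable {V : Type u}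

/-- A single step of a walk: an edge instance together with the direction in
which it is traversed (this records, in particular, orientations of loops).
A directed edge has a tail at its source and a head at its target; a bidirected
edge has heads at both endpoints. -/
inductive Step (G : DMG V) : V → V → Type u
  | dirF : ∀ {a b : V}, G.dir a b → Step G a b
  | dirB : ∀ {a b : V}, G.dir b a → Step G a b
  | bid  : ∀ {a b : V}, G.bi a b → Step G a b

/-- Whether the step has a head (edge mark) at its start node. -/
def Step.headStart {G : DMG V} : ∀ {a b : V}, Step G a b → Bool
  | _, _, .dirF _ => false
  | _, _, .dirB _ => true
  | _, _, .bid _ => true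

/-- Whether the step has a head (edge mark) at its end node. -/
def Step.headEnd {G : DMG V} : ∀ {a b : V}, Step G a b → Bool
  | _, _, .dirF _ => true
  | _, _, .dirB _ => false
  | _, _, .bid _ => true

/-- The step traverses a bidirected edge. -/
def Step.IsBid {G : DMG V} {a b : V} : Step G a b → Prop
  | .bid _ => True
  | _ => False

/-- The step traverses a directed edge, forwards. -/
def Step.IsDirF {G : DMG V} {a b : V} : Step G a b → Prop
  | .dirF _ => True
  | _ => False

/-- The underlying edge of a step: a directed edge is the ordered pair
(tail, head); a bidirected edge is the unordered pair of its endpoints. -/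
def Step.edge {G : DMG V} : ∀ {a b : V}, Step G a b → (V × V) ⊕ (Sym2 V)
  | a, b, .dirF _ => Sum.inl (a, b)
  | a, b, .dirB _ => Sum.inl (b, a)
  | a, b, .bid _ => Sum.inr s(a, b)

/-- A walk in a DMG: an alternating sequence of nodes and edges, each edge
between its neighbouring nodes, with a chosen orientation of each edge
(in particular of each directed loop). -/
inductive Walk (G : DMG V) : V → V → Type u
  | nil (a : V) : Walk G a a
  | cons {a b c : V} (s : Step G a b) (w : Walk G b c) : Walk G a c

namespace Walk

variable {G : DMG V}

/-- A nontrivial walk contains at least one edge. -/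
def Nontrivial : ∀ {a b : V}, Walk G a b → Prop
  | _, _, .nil _ => False
  | _, _, .cons _ _ => True

/-- The list of nodes of a walk, in order (with multiplicity). -/
def nodes : ∀ {a b : V}, Walk G a b → List V
  | a, _, .nil _ => [a]
  | a, _, .cons _ w => a :: w.nodes

/-- The non-endpoint (internal) nodes of a walk, in order (with multiplicity). -/
def interior {a b : V} (w : Walk G a b) : List V :=
  (w.nodes.dropLast).drop 1

/-- The list of edges of a walk. -/
def edges : ∀ {a b : V}, Walk G a b → List ((V × V) ⊕ (Sym2 V))
  | _, _, .nil _ => []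
  | _, _, .cons s w => s.edge :: w.edges

/-- Whether the first edge of the walk has a head at the first node
(`false` for a trivial walk). -/
def firstHead : ∀ {a b : V}, Walk G a b → Bool
  | _, _, .nil _ => false
  | _, _, .cons s _ => s.headStart

/-- Whether the last edge of the walk has a head at the last node
(`false` for a trivial walk). -/
def lastHead : ∀ {a b : V}, Walk G a b → Bool
  | _, _, .nil _ => false
  | _, _, .cons s (.nil _) => s.headEnd
  | _, _, .cons _ (.cons t w) => lastHead (Walk.cons t w)

/-- Helper: conditions at all remaining internal node instances of a walk,
where `h` records whether the edge arriving at the current start node has a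
head there.  A node instance is a collider if both adjoining edges have a
head at it; a collider must lie in `Anc`, a noncollider must avoid `C`. -/
def openFrom (C Anc : Set V) : ∀ {a b : V}, Bool → Walk G a b → Prop
  | _, _, _, .nil _ => True
  | a, _, h, .cons s w =>
      (if h && s.headStart then a ∈ Anc else a ∉ C) ∧ openFrom C Anc s.headEnd w

/-- Helper: every remaining internal node instance which is a collider lies in `S`. -/
def collInFrom (S : Set V) : ∀ {a b : V}, Bool → Walk G a b → Prop
  | _, _, _, .nil _ => True
  | a, _, h, .cons s w =>
      ((h && s.headStart) = true → a ∈ S) ∧ collInFrom S s.headEnd w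

/-- Every collider (internal node instance with heads on both sides) of the
walk lies in `S`. -/
def CollidersIn (S : Set V) : ∀ {a b : V}, Walk G a b → Prop
  | _, _, .nil _ => True
  | _, _, .cons s w => collInFrom S s.headEnd w

/-- The walk has no colliders. -/
def NoColliders {a b : V} (w : Walk G a b) : Prop :=
  w.CollidersIn ∅

/-- Helper: every remaining internal node instance is a collider. -/
def allCollFrom : ∀ {a b : V}, Bool → Walk G a b → Prop
  | _, _, _, .nil _ => True
  | _, _, h, .cons s w => (h && s.headStart) = true ∧ allCollFrom s.headEnd w

/-- Every internal node instance of the walk is a collider (no noncolliders). -/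
def AllColliders : ∀ {a b : V}, Walk G a b → Prop
  | _, _, .nil _ => True
  | _, _, .cons s w => allCollFrom s.headEnd w

/-- Every edge of the walk is bidirected. -/
def AllBid : ∀ {a b : V}, Walk G a b → Prop
  | _, _, .nil _ => True
  | _, _, .cons s w => s.IsBid ∧ w.AllBid

/-- The walk consists of a directed first edge (pointing forwards) followed by
bidirected edges only (the form `α → β` or `α → γ₁ ↔ ⋯ ↔ γₙ ↔ β`). -/
def UniForm : ∀ {a b : V}, Walk G a b → Prop
  | _, _, .nil _ => False
  | _, _, .cons s w => s.IsDirF ∧ w.AllBid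

end Walk

/-- `a` is an ancestor of `b`: there is a (possibly trivial) directed path
from `a` to `b`. -/
def anc (G : DMG V) (a b : V) : Prop := Relation.ReflTransGen G.dir a b

/-- The set of ancestors of nodes of `C`. -/
def anSet (G : DMG V) (C : Set V) : Set V := {a | ∃ c ∈ C, G.anc a c}

/-- The walk is μ-connecting given `C`: it is nontrivial, its first node is not
in `C`, every collider lies in `An(C)`, no noncollider lies in `C`, and its
final edge has a head at the final node. -/
def Walk.MuConn {G : DMG V} (C : Set V) : ∀ {a b : V}, Walk G a b → Prop
  | _, _, .nil _ => False
  | a, _, .cons s w =>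
      a ∉ C ∧ Walk.openFrom C (G.anSet C) s.headEnd w ∧ (Walk.cons s w).lastHead = true

/-- `B` is μ-separated from `A` given `C` in `G`: there is no μ-connecting
walk from any node of `A` to any node of `B` given `C`. -/
def muSep (G : DMG V) (A B C : Set V) : Prop :=
  ∀ ⦃a b : V⦄, a ∈ A → b ∈ B → ∀ w : Walk G a b, ¬ w.MuConn C

/-- Two DMGs on the same node set are Markov equivalent: they induce the same
independence model via μ-separation, i.e. `I(G₁) = I(G₂)`. -/
def MarkovEq (G₁ G₂ : DMG V) : Prop :=
  ∀ A B C : Set V, muSep G₁ A B C ↔ muSep G₂ A B C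

/-- `b` is separable from `a` in `I(G)`: there is `C ⊆ V ∖ {a}` with
`⟨{a},{b} | C⟩ ∈ I(G)`. -/
def separable (G : DMG V) (a b : V) : Prop :=
  ∃ C : Set V, a ∉ C ∧ muSep G {a} {b} C

/-- `a ∈ u(b, I(G))`: `b` is inseparable from `a` in `I(G)`. -/
def inU (G : DMG V) (a b : V) : Prop := ¬ G.separable a b

/-- `G₁` is a subgraph of `G₂` (same node set, edge-set inclusion). -/
def Sub (G₁ G₂ : DMG V) : Prop :=
  (∀ a b, G₁.dir a b → G₂.dir a b) ∧ (∀ a b, G₁.bi a b → G₂.bi a b)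

/-- The DMG obtained by adding the directed edge `a → b`. -/
def addDir (G : DMG V) (a b : V) : DMG V where
  dir x y := G.dir x y ∨ (x = a ∧ y = b)
  bi := G.bi
  bi_symm := G.bi_symm

/-- The DMG obtained by adding the bidirected edge `a ↔ b`. -/
def addBi (G : DMG V) (a b : V) : DMG V where
  dir := G.dir
  bi x y := G.bi x y ∨ (x = a ∧ y = b) ∨ (x = b ∧ y = a)
  bi_symm x y h := by
    rcases h with h | h | h
    · exact Or.inl (G.bi_symm _ _ h)
    · exact Or.inr (Or.inr ⟨h.2, h.1⟩)
    · exact Or.inr (Or.inl ⟨h.2, h.1⟩)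

/-- The DMG obtained by removing the directed edge `a → b`. -/
def removeDir (G : DMG V) (a b : V) : DMG V where
  dir x y := G.dir x y ∧ ¬(x = a ∧ y = b)
  bi := G.bi
  bi_symm := G.bi_symm

/-- The DMG obtained by removing the bidirected edge `a ↔ b`. -/
def removeBi (G : DMG V) (a b : V) : DMG V where
  dir := G.dir
  bi x y := G.bi x y ∧ ¬((x = a ∧ y = b) ∨ (x = b ∧ y = a))
  bi_symm x y h := ⟨G.bi_symm _ _ h.1, fun hc => h.2 (by tauto)⟩

/-- The complete DMG: all directed and all bidirected edges present. -/
def IsComplete (G : DMG V) : Prop :=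
  (∀ a b, G.dir a b) ∧ (∀ a b, G.bi a b)

/-- A DMG is maximal if it is complete, or adding any (absent) edge changes the
induced independence model. -/
def IsMaximal (G : DMG V) : Prop :=
  G.IsComplete ∨
    ∀ a b : V, (¬ G.dir a b → ¬ MarkovEq (G.addDir a b) G) ∧
      (¬ G.bi a b → ¬ MarkovEq (G.addBi a b) G)

end DMG
namespace DMG

variable {V : Type u}

/-- An inducing path from `a` to `b`: a nontrivial path or cycle from `a` to
`b` with a head at `b`, with no noncolliders, and on which every node is an
ancestor of `a` or of `b`. -/
def IsInducingPath (G : DMG V) {a b : V} (w : Walk G a b) : Prop :=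
  w.Nontrivial ∧
  (w.nodes.Nodup ∨ (a = b ∧ w.nodes.dropLast.Nodup)) ∧
  w.lastHead = true ∧
  w.AllColliders ∧
  ∀ x ∈ w.nodes, G.anc x a ∨ G.anc x b

/-- A bidirected inducing path: an inducing path all of whose edges are bidirected. -/
def IsBidirectedIP (G : DMG V) {a b : V} (w : Walk G a b) : Prop :=
  G.IsInducingPath w ∧ w.AllBid

/-- A directed inducing path: an inducing path of the form `α → β` or
`α → γ₁ ↔ ⋯ ↔ γₙ ↔ β` with every `γᵢ` an ancestor of `β`. -/
def IsDirectedIP (G : DMG V) {a b : V} (w : Walk G a b) : Prop :=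
  G.IsInducingPath w ∧ w.UniForm ∧ ∀ x ∈ w.interior, G.anc x b

/-- There exists a nontrivial walk in `G` between `x` and `y` with no
colliders, all non-endpoint nodes in `M`, and with edge marks `hs` at `x`
(`true` = head) and `he` at `y`. -/
def ConnThrough (G : DMG V) (M : Set V) (x y : V) (hs he : Bool) : Prop :=
  ∃ w : Walk G x y, w.Nontrivial ∧ w.NoColliders ∧
    (∀ z ∈ w.interior, z ∈ M) ∧ w.firstHead = hs ∧ w.lastHead = he

/-- The latent projection `m(G, O)` of `G` on `O`: the DMG on node set `O`
having an edge (with given endpoint marks) between `α` and `β` if and only if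
`G` contains a nontrivial endpoint-identical walk between `α` and `β` with no
colliders and all non-endpoint nodes in `M = V ∖ O`. -/
def latentProj (G : DMG V) (O : Set V) : DMG {x : V // x ∈ O} where
  dir x y := ConnThrough G Oᶜ x.1 y.1 false true
  bi x y := ConnThrough G Oᶜ x.1 y.1 true true ∨ ConnThrough G Oᶜ y.1 x.1 true true
  bi_symm x y h := h.symm

/-- `x` is directedly collider-connected to `b`: there is a nontrivial walk
from `x` to `b` with a head at `b` on which every non-endpoint node is a
collider. -/
def dirCollConn (G : DMG V) (x b : V) : Prop :=
  ∃ w : Walk G x b, w.Nontrivial ∧ w.AllColliders ∧ w.lastHead = true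

/-- The set `D(a,b)` of nodes in `An({a,b})` directedly collider-connected to
`b`, except `a`. -/
def Dset (G : DMG V) (a b : V) : Set V :=
  {x | x ∈ G.anSet {a, b} ∧ G.dirCollConn x b} \ {a}

/-- `a` and `b` are potential siblings in the independence model `I(G)`. -/
def PotSib (G : DMG V) (a b : V) : Prop :=
  (G.inU b a ∧ G.inU a b) ∧
  (∀ (γ : V) (C : Set V), b ∈ C → muSep G {γ} {a} C → muSep G {γ} {b} C) ∧
  (∀ (γ : V) (C : Set V), a ∈ C → muSep G {γ} {b} C → muSep G {γ} {a} C)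

/-- `a` is a potential parent of `b` in the independence model `I(G)`. -/
def PotPar (G : DMG V) (a b : V) : Prop :=
  G.inU a b ∧
  (∀ (γ : V) (C : Set V), a ∉ C → muSep G {γ} {b} C → muSep G {γ} {a} C) ∧
  (∀ (γ δ : V) (C : Set V), a ∉ C → b ∈ C →
    muSep G {γ} {δ} C → muSep G {γ} {b} C ∨ muSep G {a} {δ} C) ∧
  (∀ (γ : V) (C : Set V), a ∉ C → muSep G {b} {γ} C → muSep G {b} {γ} (C ∪ {a}))

/-- The graph `N(I(G))`: directed edge `a → b` present iff `a` is a potential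
parent of `b` in `I(G)`, bidirected edge `a ↔ b` present iff `a` and `b` are
potential siblings in `I(G)` (potential siblinghood is symmetric). -/
def NGraph (G : DMG V) : DMG V where
  dir a b := G.PotPar a b
  bi a b := G.PotSib a b ∨ G.PotSib b a
  bi_symm _ _ h := h.symm

/-- A path is m-connecting given `C` if it is a path (no repeated nodes), no
noncollider on it is in `C` and every collider on it is in `An(C)`. -/
def Walk.MConn {G : DMG V} (C : Set V) : ∀ {a b : V}, Walk G a b → Prop
  | _, _, .nil _ => True
  | _, _, .cons s w =>
      (Walk.cons s w).nodes.Nodup ∧ Walk.openFrom C (G.anSet C) s.headEnd w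

/-- `A` and `B` are m-separated by `C`: there is no m-connecting path between
a node of `A` and a node of `B` given `C`. -/
def mSep (G : DMG V) (A B C : Set V) : Prop :=
  ∀ ⦃a b : V⦄, a ∈ A → b ∈ B →
    (∀ w : Walk G a b, ¬ w.MConn C) ∧ (∀ w : Walk G b a, ¬ w.MConn C)

/-- Auxiliary directed-edge relation of the `B`-history version of `G`. -/
def histDir (G : DMG V) (B : Set V) : (V ⊕ {x : V // x ∈ B}) → (V ⊕ {x : V // x ∈ B}) → Prop
  | .inl u, .inl v => G.dir u v
  | .inl u, .inr v => G.dir u v.1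
  | _, _ => False

/-- Auxiliary bidirected-edge relation of the `B`-history version of `G`. -/
def histBi (G : DMG V) (B : Set V) : (V ⊕ {x : V // x ∈ B}) → (V ⊕ {x : V // x ∈ B}) → Prop
  | .inl u, .inl v => G.bi u v
  | .inl u, .inr v => G.bi u v.1
  | .inr u, .inl v => G.bi u.1 v
  | .inr _, .inr _ => False

/-- The `B`-history version `G(B)` of `G`: node set `V ⊔ Bᵖ`, whose subgraph
on `V` is `G`, with additionally `α ↔ βᵖ` whenever `α ↔ β` in `G` and
`α → βᵖ` whenever `α → β` in `G` (for `α ∈ V`, `β ∈ B`). -/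
def hist (G : DMG V) (B : Set V) : DMG (V ⊕ {x : V // x ∈ B}) where
  dir := G.histDir B
  bi := G.histBi B
  bi_symm x y h := by
    cases x <;> cases y <;>
      simp only [histBi] at h ⊢ <;>
      first
        | exact G.bi_symm _ _ h
        | exact h

end DMG

namespace DMG

variable {V : Type u} {G : DMG V}

/-- The mark arriving at the end of the walk, given incoming mark `h` at the start. -/
def Walk.endHead : ∀ {a b : V}, Bool → Walk G a b → Bool
  | _, _, h, .nil _ => h
  | _, _, _, .cons s w => Walk.endHead s.headEnd w

/-- Concatenation of walks. -/
def Walk.append : ∀ {a b c : V}, Walk G a b → Walk G b c → Walk G a c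
  | _, _, _, .nil _, v => v
  | _, _, _, .cons s w, v => .cons s (w.append v)

lemma Walk.endHead_append : ∀ {a b c : V} (h : Bool) (w : Walk G a b) (v : Walk G b c),
    Walk.endHead h (w.append v) = Walk.endHead (Walk.endHead h w) v
  | _, _, _, _, .nil _, _ => rfl
  | _, _, _, _, .cons s w, v => Walk.endHead_append s.headEnd w v

lemma Walk.lastHead_eq_endHead : ∀ {a b c : V} (s : Step G a b) (w : Walk G b c),
    (Walk.cons s w).lastHead = Walk.endHead s.headEnd w
  | _, _, _, _, .nil _ => rfl
  | _, _, _, _, .cons t w => Walk.lastHead_eq_endHead t w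

lemma Walk.openFrom_append {C A : Set V} : ∀ {x y z : V} (h : Bool) (w : Walk G x y) (v : Walk G y z),
    Walk.openFrom C A h (w.append v) ↔
      Walk.openFrom C A h w ∧ Walk.openFrom C A (Walk.endHead h w) v
  | _, _, _, _, .nil _, _ => by simp [Walk.append, Walk.openFrom, Walk.endHead]
  | _, _, _, h, .cons s w, v => by
      simp only [Walk.append, Walk.openFrom, Walk.endHead,
        Walk.openFrom_append s.headEnd w v, and_assoc]

lemma mem_anSet_of_mem {C : Set V} {x : V} (hx : x ∈ C) : x ∈ G.anSet C :=
  ⟨x, hx, Relation.ReflTransGen.refl⟩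

lemma mem_anSet_union {C : Set V} {a x : V} (hx : x ∈ G.anSet (C ∪ {a})) :
    x ∈ G.anSet C ∨ G.anc x a := by
  obtain ⟨y, hy, hxy⟩ := hx
  rcases hy with hy | hy
  · exact Or.inl ⟨y, hy, hxy⟩
  · exact Or.inr (hy ▸ hxy)

/-- Key surgery lemma: a walk open given `C ∪ {a}` is either open given `C`, or has a
last "bad" collider `c` ancestral to `a` with tail open given `C`. -/
lemma key (G : DMG V) (C : Set V) (a : V) {γ : V} :
    ∀ {x : V} (w : Walk G x γ) (h0 : Bool),
    Walk.openFrom (C ∪ {a}) (G.anSet (C ∪ {a})) h0 w →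
    Walk.endHead h0 w = true →
    Walk.openFrom C (G.anSet C) h0 w ∨
    ∃ (c d : V) (t : Step G c d) (v : Walk G d γ),
      G.anc c a ∧ c ∉ G.anSet C ∧
      Walk.openFrom C (G.anSet C) t.headEnd v ∧ Walk.endHead t.headEnd v = true := by
  intro x w
  induction w with
  | nil => exact fun _ _ _ => Or.inl trivial
  | @cons x y _ t w' ih =>
    intro h0 hop hend
    rw [Walk.openFrom] at hop
    obtain ⟨hx, hop'⟩ := hop
    have hend' : Walk.endHead t.headEnd w' = true := hend
    rcases ih t.headEnd hop' hend' with hL | hR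
    · cases hb : (h0 && t.headStart) with
      | true =>
        rw [if_pos hb] at hx
        by_cases hmem : x ∈ G.anSet C
        · refine Or.inl ?_
          rw [Walk.openFrom, if_pos hb]
          exact ⟨hmem, hL⟩
        · have hxa : G.anc x a := (mem_anSet_union hx).resolve_left hmem
          exact Or.inr ⟨x, y, t, w', hxa, hmem, hL, hend'⟩
      | false =>
        rw [if_neg (by simp [hb])] at hx
        refine Or.inl ?_
        rw [Walk.openFrom, if_neg (by simp [hb])]
        exact ⟨fun hc => hx (Or.inl hc), hL⟩
    · exact Or.inr hR

/-- Building the replacement walk along a reversed directed path. -/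
lemma lemB (G : DMG V) (C : Set V) {c d γ : V} (hc : c ∉ G.anSet C)
    (t : Step G c d) (v : Walk G d γ)
    (hv : Walk.openFrom C (G.anSet C) t.headEnd v)
    (he : Walk.endHead t.headEnd v = true) :
    ∀ {e : V}, Relation.ReflTransGen G.dir c e → e ∉ C →
      ∃ W : Walk G e γ, Walk.openFrom C (G.anSet C) false W ∧
        Walk.endHead false W = true := by
  intro e hce
  induction hce with
  | refl =>
    intro hcC
    refine ⟨Walk.cons t v, ?_, he⟩
    rw [Walk.openFrom]
    exact ⟨by simp [Step.headStart]; exact hcC, hv⟩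
  | @tail m e h1 h2 ih =>
    intro heC
    have hm : m ∉ C := fun hmC => hc ⟨m, hmC, h1⟩
    obtain ⟨W, hW, hWe⟩ := ih hm
    refine ⟨Walk.cons (Step.dirB h2) W, ?_, hWe⟩
    rw [Walk.openFrom]
    exact ⟨by simp [Step.headStart]; exact heC, hW⟩

lemma muSep_singleton_iff (G : DMG V) (p q : V) (C : Set V) :
    G.muSep {p} {q} C ↔ ∀ w : Walk G p q, ¬ w.MuConn C := by
  constructor
  · exact fun h w => h rfl rfl w
  · intro h x y hx hy w hw
    rw [Set.mem_singleton_iff] at hx hy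
    subst hx; subst hy
    exact h w hw

end DMG

open DMG

/-- Proposition 15: if the directed edge `a → b` is in `G`,
then `a` is a potential parent of `b` in `I(G)`. -/
theorem stmt14 {V : Type u} [Fintype V] (G : DMG V) (a b : V) (h : G.dir a b) :
    G.PotPar a b := by
  classical
  refine ⟨?_, ?_, ?_, ?_⟩
  · rintro ⟨C, haC, hsep⟩
    exact (G.muSep_singleton_iff a b C).mp hsep (.cons (.dirF h) (.nil b))
      ⟨haC, trivial, rfl⟩
  · intro γ C haC hsep
    rw [G.muSep_singleton_iff] at hsep ⊢
    intro w hw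
    cases w with
    | nil => exact hw
    | cons s w0 =>
      obtain ⟨hγ, hopen, hlast⟩ := hw
      refine hsep (Walk.cons s (w0.append (.cons (.dirF h) (.nil b)))) ⟨hγ, ?_, ?_⟩
      · rw [Walk.openFrom_append]
        refine ⟨hopen, ?_⟩
        rw [Walk.openFrom]
        refine ⟨?_, trivial⟩
        simpa [Step.headStart] using haC
      · rw [Walk.lastHead_eq_endHead, Walk.endHead_append]
        rfl
  · intro γ δ C haC hbC hsep
    rw [G.muSep_singleton_iff] at hsep
    by_contra hcon
    push_neg at hcon
    obtain ⟨h1, h2⟩ := hcon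
    rw [G.muSep_singleton_iff] at h1 h2
    push_neg at h1 h2
    obtain ⟨w1, hmc1⟩ := h1
    obtain ⟨w2, hmc2⟩ := h2
    cases w1 with
    | nil => exact hmc1
    | cons s1 u1 =>
      cases w2 with
      | nil => exact hmc2
      | cons s2 u2 =>
        obtain ⟨hγ1, hop1, hl1⟩ := hmc1
        obtain ⟨ha2, hop2, hl2⟩ := hmc2
        have he1 : Walk.endHead s1.headEnd u1 = true := by
          rw [← Walk.lastHead_eq_endHead]; exact hl1
        refine hsep
          (Walk.cons s1 (u1.append (.cons (.dirB h) (.cons s2 u2)))) ⟨hγ1, ?_, ?_⟩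
        · rw [Walk.openFrom_append]
          refine ⟨hop1, ?_⟩
          rw [he1, Walk.openFrom]
          refine ⟨?_, ?_⟩
          · simpa [Step.headStart] using G.mem_anSet_of_mem hbC
          · rw [Walk.openFrom]
            refine ⟨?_, hop2⟩
            simpa [Step.headStart, Step.headEnd] using ha2
        · rw [Walk.lastHead_eq_endHead, Walk.endHead_append]
          show Walk.endHead s2.headEnd u2 = true
          rw [← Walk.lastHead_eq_endHead]; exact hl2
  · intro γ C haC hsep
    rw [G.muSep_singleton_iff] at hsep ⊢
    intro w hw
    cases w with
    | nil => exact hw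
    | cons s w0 =>
      obtain ⟨hbCa, hopen, hlast⟩ := hw
      have hb' : b ∉ C := fun hc => hbCa (Or.inl hc)
      have hend : Walk.endHead s.headEnd w0 = true := by
        rw [← Walk.lastHead_eq_endHead]; exact hlast
      rcases DMG.key G C a w0 s.headEnd hopen hend with hL | ⟨c, d, t, v, hca, hcnot, hov, hev⟩
      · exact hsep (Walk.cons s w0) ⟨hb', hL, hlast⟩
      · obtain ⟨W, hW, hWe⟩ := DMG.lemB G C hcnot t v hov hev hca haC
        refine hsep (Walk.cons (Step.dirB h) W) ⟨hb', hW, ?_⟩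
        rw [Walk.lastHead_eq_endHead]
        exact hWe
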